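/- Every tree T of order n ≥ 3 satisfies γ_{r2}(T) ≤ 3n/4. -/

import Mathlib

open Finset

/-- A `k`-rainbow dominating function: every vertex assigned `∅` sees all `k` colors
among its neighbors. -/
def SimpleGraph.IsRainbowDF {V : Type*} {k : ℕ} (G : SimpleGraph V)
    (f : V → Finset (Fin k)) : Prop :=
  ∀ v, f v = ∅ → ∀ c : Fin k, ∃ u, G.Adj v u ∧ c ∈ f u

/-- The `k`-rainbow domination number. -/
noncomputable def SimpleGraph.rainbowNum {V : Type*} [Fintype V] (G : SimpleGraph V)
    (k : ℕ) : ℕ :=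
  sInf {w | ∃ f : V → Finset (Fin k), G.IsRainbowDF f ∧ w = ∑ v, (f v).card}

/-- `S` is a dominating set of `G`. -/
def SimpleGraph.IsDomSet {V : Type*} (G : SimpleGraph V) (S : Set V) : Prop :=
  ∀ v, v ∉ S → ∃ u ∈ S, G.Adj v u

/-- The domination number. -/
noncomputable def SimpleGraph.domNum {V : Type*} [Fintype V] (G : SimpleGraph V) : ℕ :=
  sInf {n | ∃ S : Finset V, G.IsDomSet ↑S ∧ n = S.card}

namespace TreeRainbow

open SimpleGraph SimpleGraph.Walk

variable {V : Type*} {T : SimpleGraph V}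

/-- In a tree, every path realizes the distance. -/
lemma length_eq_dist (hT : T.IsTree) {a b : V} (p : T.Walk a b) (hp : p.IsPath) :
    p.length = T.dist a b := by
  classical
  obtain ⟨q, hq⟩ := hT.isConnected.exists_walk_length_eq_dist a b
  have h1 : T.dist a b ≤ p.length := SimpleGraph.dist_le p
  have h2 : p = q.bypass := (hT.existsUnique_path a b).unique hp q.bypass_isPath
  have h3 : q.bypass.length ≤ q.length := q.length_bypass_le
  have h4 := congrArg Walk.length h2
  omega

lemma concat_isPath (hT : T.IsTree) {a u v : V} {p : T.Walk a u} (hp : p.IsPath)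
    (h : T.Adj u v) (hv : v ∉ p.support) : (p.concat h).IsPath := by
  rw [← Walk.isPath_reverse_iff, Walk.reverse_concat]
  exact hp.reverse.cons (by simpa [Walk.support_reverse] using hv)

/-- adjacent vertices have distances (from any root) differing by exactly one -/
lemma adj_dist (hT : T.IsTree) (r : V) {u v : V} (h : T.Adj u v) :
    T.dist r v = T.dist r u + 1 ∨ T.dist r u = T.dist r v + 1 := by
  classical
  have h1 : T.dist r v ≤ T.dist r u + 1 := by
    have t := hT.isConnected.dist_triangle (u := r) (v := u) (w := v)
    have : T.dist u v ≤ 1 := by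
      simpa using SimpleGraph.dist_le (Walk.cons h Walk.nil)
    omega
  have h2 : T.dist r u ≤ T.dist r v + 1 := by
    have t := hT.isConnected.dist_triangle (u := r) (v := v) (w := u)
    have : T.dist v u ≤ 1 := by
      simpa using SimpleGraph.dist_le (Walk.cons h.symm Walk.nil)
    omega
  have hne : T.dist r u ≠ T.dist r v := by
    intro heq
    obtain ⟨p, hp, -⟩ := hT.existsUnique_path r u
    have hlen : p.length = T.dist r u := length_eq_dist hT p hp
    by_cases hv : v ∈ p.support
    · have h4 : (p.takeUntil v hv).length = T.dist r v :=
        length_eq_dist hT _ (hp.takeUntil hv)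
      have hspec := congrArg Walk.length (p.take_spec hv)
      rw [Walk.length_append] at hspec
      have hz : (p.dropUntil v hv).length = 0 := by omega
      exact h.ne' (Walk.eq_of_length_eq_zero hz)
    · have h5 : (p.concat h).length = T.dist r v :=
        length_eq_dist hT _ (concat_isPath hT hp h hv)
      rw [Walk.length_concat] at h5
      omega
  omega

/-- unique parent -/
lemma parent_unique (hT : T.IsTree) (r : V) {v u₁ u₂ : V} (h₁ : T.Adj v u₁) (h₂ : T.Adj v u₂)
    (hd₁ : T.dist r u₁ + 1 = T.dist r v) (hd₂ : T.dist r u₂ + 1 = T.dist r v) : u₁ = u₂ := by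
  classical
  obtain ⟨p₁, hp₁, -⟩ := hT.existsUnique_path r u₁
  obtain ⟨p₂, hp₂, -⟩ := hT.existsUnique_path r u₂
  have hl₁ : p₁.length = T.dist r u₁ := length_eq_dist hT p₁ hp₁
  have hl₂ : p₂.length = T.dist r u₂ := length_eq_dist hT p₂ hp₂
  have hv₁ : v ∉ p₁.support := by
    intro hv
    have h4 : (p₁.takeUntil v hv).length = T.dist r v :=
      length_eq_dist hT _ (hp₁.takeUntil hv)
    have h5 := p₁.length_takeUntil_le hv
    omega
  have hv₂ : v ∉ p₂.support := by
    intro hv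
    have h4 : (p₂.takeUntil v hv).length = T.dist r v :=
      length_eq_dist hT _ (hp₂.takeUntil hv)
    have h5 := p₂.length_takeUntil_le hv
    omega
  have hq₁ : (p₁.concat h₁.symm).IsPath := concat_isPath hT hp₁ h₁.symm hv₁
  have hq₂ : (p₂.concat h₂.symm).IsPath := concat_isPath hT hp₂ h₂.symm hv₂
  have heq : p₁.concat h₁.symm = p₂.concat h₂.symm :=
    (hT.existsUnique_path r v).unique hq₁ hq₂
  obtain ⟨hv, -⟩ := Walk.concat_inj heq
  exact hv

/-- parent exists -/
lemma exists_parent (hT : T.IsTree) (r : V) {v : V} (hv : v ≠ r) :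
    ∃ u, T.Adj v u ∧ T.dist r u + 1 = T.dist r v := by
  obtain ⟨p, hp, -⟩ := hT.existsUnique_path r v
  have hlen : p.length = T.dist r v := length_eq_dist hT p hp
  obtain ⟨u, h, q, hq⟩ := Walk.exists_eq_cons_of_ne hv p.reverse
  have hqp : q.IsPath := by
    have := hp.reverse
    rw [hq] at this
    exact this.of_cons
  have hql : q.reverse.length = T.dist r u := length_eq_dist hT q.reverse hqp.reverse
  have hlenrev := congrArg Walk.length hq
  rw [Walk.length_reverse, Walk.length_cons] at hlenrev
  rw [Walk.length_reverse] at hql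
  exact ⟨u, h, by omega⟩

/-- a tree with at least two vertices has a leaf -/
lemma exists_leaf [Fintype V] (hT : T.IsTree) (hcard : 2 ≤ Fintype.card V) :
    ∃ r u₀, T.Adj r u₀ ∧ ∀ w, T.Adj r w → w = u₀ := by
  have : Nonempty V := Fintype.card_pos_iff.mp (by omega)
  obtain ⟨x⟩ := this
  obtain ⟨r, -, hmax⟩ := Finset.exists_max_image univ (fun v => T.dist x v) ⟨x, mem_univ x⟩
  have hrx : r ≠ x := by
    rintro rfl
    obtain ⟨y, hy⟩ := Fintype.exists_ne_of_one_lt_card (by omega) r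
    have h1 := hmax y (mem_univ y)
    have h2 : 0 < T.dist r y := hT.isConnected.pos_dist_of_ne (Ne.symm hy)
    simp only [SimpleGraph.dist_self] at h1
    omega
  obtain ⟨u₀, h, hd⟩ := exists_parent hT x hrx
  refine ⟨r, u₀, h, fun w hw => ?_⟩
  rcases adj_dist hT x hw with h1 | h1
  · have := hmax w (mem_univ w)
    omega
  · exact parent_unique hT x hw h (by omega) hd

/-- `v` is a leaf (at most one neighbor). -/
def IsLf (T : SimpleGraph V) (v : V) : Prop := ∀ u w, T.Adj v u → T.Adj v w → u = w

/-- `v` has a leaf neighbor. -/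
def HasLfNbr (T : SimpleGraph V) (v : V) : Prop := ∃ u, T.Adj v u ∧ IsLf T u

open scoped Classical in
/-- The parity-`b` rainbow dominating function. -/
noncomputable def scheme (T : SimpleGraph V) (r : V) (b : ℕ) : V → Finset (Fin 2) :=
  fun v => if T.dist r v % 2 = b then
      (if HasLfNbr T v then Finset.univ
        else {⟨T.dist r v / 2 % 2, Nat.mod_lt _ (by norm_num)⟩})
    else ∅

open scoped Classical in
lemma scheme_card (r : V) (v : V) :
    (scheme T r 0 v).card + (scheme T r 1 v).card = if HasLfNbr T v then 2 else 1 := by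
  unfold scheme
  rcases Nat.mod_two_eq_zero_or_one (T.dist r v) with h | h <;>
    · simp only [h]
      norm_num
      split_ifs <;> simp

lemma scheme_valid [Fintype V] (hT : T.IsTree) (hcard : 2 ≤ Fintype.card V)
    {r u₀ : V} (hr : T.Adj r u₀) (hrleaf : ∀ w, T.Adj r w → w = u₀)
    {b : ℕ} (hb : b < 2) : T.IsRainbowDF (scheme T r b) := by
  classical
  intro v hv c
  have hvb : T.dist r v % 2 ≠ b := by
    intro h
    rw [scheme] at hv
    rw [if_pos h] at hv
    split_ifs at hv with h'
    · exact absurd (congrArg Finset.card hv) (by simp)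
    · exact absurd (congrArg Finset.card hv) (by simp)
  have hmem : ∀ x, T.dist r x % 2 = b →
      (⟨T.dist r x / 2 % 2, Nat.mod_lt _ (by norm_num)⟩ : Fin 2) ∈ scheme T r b x := by
    intro x hx
    rw [scheme]
    rw [if_pos hx]
    split_ifs
    · exact mem_univ _
    · exact mem_singleton_self _
  have hfull : ∀ x, T.dist r x % 2 = b → HasLfNbr T x → c ∈ scheme T r b x := by
    intro x hx hlf
    rw [scheme]
    rw [if_pos hx, if_pos hlf]
    exact mem_univ _
  by_cases hleaf : IsLf T v
  · obtain ⟨u, hu⟩ : ∃ u, T.Adj v u := by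
      obtain ⟨w, hw⟩ := Fintype.exists_ne_of_one_lt_card (by omega) v
      obtain ⟨p⟩ := hT.isConnected.preconnected v w
      obtain ⟨a, ha, q, -⟩ := Walk.exists_eq_cons_of_ne (Ne.symm hw) p
      exact ⟨a, ha⟩
    have hub : T.dist r u % 2 = b := by
      rcases adj_dist hT r hu with h1 | h1 <;> omega
    exact ⟨u, hu, hfull u hub ⟨v, hu.symm, hleaf⟩⟩
  · have hvr : v ≠ r := by
      rintro rfl
      exact hleaf fun a c' ha hc' => (hrleaf a ha).trans (hrleaf c' hc').symm
    obtain ⟨p, hpv, hpd⟩ := exists_parent hT r hvr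
    obtain ⟨w, hwv, hwd⟩ : ∃ w, T.Adj v w ∧ T.dist r w = T.dist r v + 1 := by
      rw [IsLf] at hleaf
      push_neg at hleaf
      obtain ⟨a, a', ha, ha', haa⟩ := hleaf
      rcases adj_dist hT r ha with h1 | h1
      · exact ⟨a, ha, h1⟩
      · rcases adj_dist hT r ha' with h2 | h2
        · exact ⟨a', ha', h2⟩
        · exact absurd (parent_unique hT r ha ha' (by omega) (by omega)) haa
    have hpb : T.dist r p % 2 = b := by omega
    have hwb : T.dist r w % 2 = b := by omega
    have hpd' : T.dist r p + 1 = T.dist r v := hpd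
    have hdiff : T.dist r p / 2 % 2 ≠ T.dist r w / 2 % 2 := by omega
    by_cases hcp : (c : ℕ) = T.dist r p / 2 % 2
    · refine ⟨p, hpv, ?_⟩
      have : c = (⟨T.dist r p / 2 % 2, Nat.mod_lt _ (by norm_num)⟩ : Fin 2) :=
        Fin.ext hcp
      rw [this]
      exact hmem p hpb
    · refine ⟨w, hwv, ?_⟩
      have hc2 : (c : ℕ) < 2 := c.isLt
      have : c = (⟨T.dist r w / 2 % 2, Nat.mod_lt _ (by norm_num)⟩ : Fin 2) :=
        Fin.ext (show (c : ℕ) = T.dist r w / 2 % 2 by omega)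
      rw [this]
      exact hmem w hwb

open scoped Classical in
lemma supports_le [Fintype V] (hT : T.IsTree) (hn : 3 ≤ Fintype.card V) :
    2 * (univ.filter (HasLfNbr T)).card ≤ Fintype.card V := by
  set S := univ.filter (HasLfNbr T) with hS
  set L := univ.filter (IsLf T) with hL
  have hSL : ∀ s ∈ S, ¬ IsLf T s := by
    intro s hs hsl
    obtain ⟨u, hsu, hul⟩ := (mem_filter.mp hs).2
    have key : ∀ (a w : V) (p : T.Walk a w), (a = s ∨ a = u) → (w = s ∨ w = u) := by
      intro a w p
      induction p with
      | nil => exact id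
      | cons h q ih =>
        rintro (rfl | rfl)
        · exact ih (Or.inr (hsl _ _ h hsu))
        · exact ih (Or.inl (hul _ _ h hsu.symm))
    have hsub : (univ : Finset V) ⊆ {s, u} := by
      intro w _
      obtain ⟨p⟩ := hT.isConnected.preconnected s w
      rcases key s w p (Or.inl rfl) with rfl | rfl <;> simp
    have : Fintype.card V ≤ 2 := by
      calc Fintype.card V = (univ : Finset V).card := (Finset.card_univ).symm
        _ ≤ ({s, u} : Finset V).card := Finset.card_le_card hsub
        _ ≤ 2 := Finset.card_insert_le _ _ |>.trans (by simp)
    omega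
  have hdisj : Disjoint S L := by
    rw [Finset.disjoint_left]
    intro a ha hal
    exact hSL a ha (mem_filter.mp hal).2
  have hinj : S.card ≤ L.card := by
    apply Finset.card_le_card_of_injOn
      (fun s => if h : HasLfNbr T s then h.choose else s)
    · intro s hs
      have h := (mem_filter.mp hs).2
      dsimp only; rw [dif_pos h]
      exact mem_filter.mpr ⟨mem_univ _, h.choose_spec.2⟩
    · intro a ha b hb hab
      have hA := (Finset.mem_coe.mp ha)
      have hB := (Finset.mem_coe.mp hb)
      have hA' := (mem_filter.mp hA).2
      have hB' := (mem_filter.mp hB).2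
      simp only [dif_pos hA', dif_pos hB'] at hab
      obtain ⟨hadjA, hlfA⟩ := hA'.choose_spec
      obtain ⟨hadjB, hlfB⟩ := hB'.choose_spec
      exact hlfB a b (hab ▸ hadjA.symm) hadjB.symm
  have hle : S.card + L.card ≤ Fintype.card V := by
    rw [← Finset.card_union_of_disjoint hdisj]
    exact (Finset.card_le_univ _).trans_eq Finset.card_univ
  omega

end TreeRainbow

open TreeRainbow in
/-- Every tree of order `n ≥ 3` satisfies `γ_{r2}(T) ≤ 3n/4`. -/
theorem rainbow2_le_three_quarters_of_isTree {V : Type*} [Fintype V]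
    (T : SimpleGraph V) (hT : T.IsTree) (hn : 3 ≤ Fintype.card V) :
    4 * T.rainbowNum 2 ≤ 3 * Fintype.card V := by
  classical
  obtain ⟨r, u₀, hr, hrl⟩ := exists_leaf hT (by omega)
  have hle0 : T.rainbowNum 2 ≤ ∑ v, (scheme T r 0 v).card :=
    Nat.sInf_le ⟨scheme T r 0, scheme_valid hT (by omega) hr hrl (by norm_num), rfl⟩
  have hle1 : T.rainbowNum 2 ≤ ∑ v, (scheme T r 1 v).card :=
    Nat.sInf_le ⟨scheme T r 1, scheme_valid hT (by omega) hr hrl (by norm_num), rfl⟩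
  have hsum : ∑ v, (scheme T r 0 v).card + ∑ v, (scheme T r 1 v).card
      = Fintype.card V + (univ.filter (HasLfNbr T)).card := by
    rw [← Finset.sum_add_distrib]
    rw [Finset.sum_congr rfl fun v _ => scheme_card r v]
    rw [Finset.sum_ite, Finset.sum_const, Finset.sum_const]
    simp only [smul_eq_mul, mul_one, Finset.filter_congr_decidable]
    have hfc := Finset.card_filter_add_card_filter_not (s := (univ : Finset V))
      (p := HasLfNbr T)
    have e1 : #(Finset.filter (fun x => HasLfNbr T x) Finset.univ)
        = #(Finset.filter (HasLfNbr T) Finset.univ) := rfl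
    have e2 : #(Finset.filter (fun x => ¬ HasLfNbr T x) Finset.univ)
        = #(Finset.filter (fun a => ¬ HasLfNbr T a) Finset.univ) := rfl
    rw [Finset.card_univ] at hfc
    omega
  have hS := supports_le hT hn
  omega
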